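/- Let Q be an odd prime, a an integer with Q not dividing a² − 1, ε = ((a²−1)/Q), δ = (2(a+1)/Q). Then T_{(Q−ε)/2}(a) ≡ δ (mod Q) and U_{(Q−ε)/2 − 1}(a) ≡ 0 (mod Q). -/

import Mathlib

open Polynomial Polynomial.Chebyshev

private lemma cheb_pow_formula {S : Type*} [CommRing S] (x s : S) (hs : s ^ 2 = x ^ 2 - 1) :
    ∀ n : ℕ, 2 * (T S n).eval x = (x + s) ^ n + (x - s) ^ n ∧
      2 * s * (U S n).eval x = (x + s) ^ (n + 1) - (x - s) ^ (n + 1) := by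
  have key : ∀ n : ℕ,
      (2 * (T S n).eval x = (x + s) ^ n + (x - s) ^ n ∧
        2 * s * (U S n).eval x = (x + s) ^ (n + 1) - (x - s) ^ (n + 1)) ∧
      (2 * (T S (n + 1)).eval x = (x + s) ^ (n + 1) + (x - s) ^ (n + 1) ∧
        2 * s * (U S (n + 1)).eval x = (x + s) ^ (n + 2) - (x - s) ^ (n + 2)) := by
    intro n
    induction n with
    | zero =>
      refine ⟨⟨?_, ?_⟩, ?_, ?_⟩ <;>
        simp [T_zero, T_one, U_zero, U_one] <;> ring
    | succ k ih =>
      refine ⟨ih.2, ?_, ?_⟩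
      · have hcast : ((k + 1 : ℕ) : ℤ) + 1 = (k : ℤ) + 2 := by push_cast; ring
        rw [hcast, T_add_two]
        simp only [eval_sub, eval_mul, eval_ofNat, eval_X]
        linear_combination 2 * x * ih.2.1 - ih.1.1 - ((x+s)^k + (x-s)^k) * hs
      · have hcast : ((k + 1 : ℕ) : ℤ) + 1 = (k : ℤ) + 2 := by push_cast; ring
        rw [hcast, U_add_two]
        simp only [eval_sub, eval_mul, eval_ofNat, eval_X]
        linear_combination 2 * x * ih.2.2 - ih.1.2 - ((x+s)^(k+1) - (x-s)^(k+1)) * hs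
  exact fun n => (key n).1

theorem chebyshev_lucas_lehmer_congr (Q : ℕ) [Fact Q.Prime] (hQ : Odd Q) (a : ℤ)
    (ha : ¬ (Q : ℤ) ∣ a ^ 2 - 1) :
    let ε : ℤ := legendreSym Q (a ^ 2 - 1)
    let δ : ℤ := legendreSym Q (2 * (a + 1))
    (T ℤ (((Q : ℤ) - ε) / 2)).eval a ≡ δ [ZMOD Q] ∧
      (U ℤ (((Q : ℤ) - ε) / 2 - 1)).eval a ≡ 0 [ZMOD Q] := by
  intro ε δ
  have hQp : Q.Prime := Fact.out
  have hQ1 : Q % 2 = 1 := Nat.odd_iff.mp hQ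
  have hQ3 : 3 ≤ Q := by have := hQp.two_le; omega
  have haK : ((a ^ 2 - 1 : ℤ) : ZMod Q) ≠ 0 := by
    rw [Ne, ZMod.intCast_zmod_eq_zero_iff_dvd]; exact ha
  set c : ZMod Q := (a : ZMod Q) ^ 2 - 1 with hc_def
  have hc : c ≠ 0 := by intro h; apply haK; push_cast; exact h
  set S := AdjoinRoot ((X : (ZMod Q)[X]) ^ 2 - C c) with hS_def
  haveI : Nontrivial S := AdjoinRoot.nontrivial _ (by
    rw [degree_X_pow_sub_C (by norm_num)]; norm_num)
  set φ : ZMod Q →+* S := AdjoinRoot.of _ with hφ_def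
  have hφinj : Function.Injective φ := φ.injective
  haveI : CharP S Q := charP_of_injective_ringHom hφinj Q
  set s : S := AdjoinRoot.root _ with hs_def
  have hs : s ^ 2 = φ c := by
    have h := AdjoinRoot.eval₂_root ((X : (ZMod Q)[X]) ^ 2 - C c)
    simp only [eval₂_sub, eval₂_pow, eval₂_X, eval₂_C] at h
    rw [sub_eq_zero] at h; exact h
  set x : S := φ (a : ZMod Q) with hx_def
  have hs' : s ^ 2 = x ^ 2 - 1 := by
    rw [hs]
    show φ ((a : ZMod Q) ^ 2 - 1) = x ^ 2 - 1
    rw [map_sub, map_pow, map_one]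
  have hαβ : (x + s) * (x - s) = 1 := by linear_combination -hs'
  have h2K : (2 : ZMod Q) ≠ 0 := by
    intro h
    have h2 : ((2 : ℕ) : ZMod Q) = 0 := by push_cast; exact h
    have := (ZMod.natCast_eq_zero_iff 2 Q).mp h2
    have := (Nat.prime_dvd_prime_iff_eq hQp Nat.prime_two).mp this
    omega
  set uK : ZMod Q := 2 * ((a : ZMod Q) + 1) with huK_def
  have huK : uK ≠ 0 := by
    intro h
    rcases mul_eq_zero.mp h with h | h
    · exact h2K h
    · apply hc
      show (a : ZMod Q) ^ 2 - 1 = 0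
      rw [eq_neg_of_add_eq_zero_left h]; ring
  set uS : S := φ uK with huS_def
  have huSu : IsUnit uS := (isUnit_iff_ne_zero.mpr huK).map φ
  have huS : uS = 2 * (x + 1) := by
    show φ (2 * ((a : ZMod Q) + 1)) = 2 * (x + 1)
    rw [map_mul, map_add, map_one, map_ofNat]
  have hεK : ((ε : ℤ) : ZMod Q) = c ^ (Q / 2) := by
    have h := legendreSym.eq_pow Q (a ^ 2 - 1)
    rw [h]; push_cast; rfl
  have hε1 : ε = 1 ∨ ε = -1 := legendreSym.eq_one_or_neg_one Q haK
  have hδuK : ((2 * (a + 1) : ℤ) : ZMod Q) = uK := by push_cast; rfl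
  have hδK : ((δ : ℤ) : ZMod Q) = uK ^ (Q / 2) := by
    have h := legendreSym.eq_pow Q (2 * (a + 1))
    rw [h, hδuK]
  have hδ1 : δ = 1 ∨ δ = -1 :=
    legendreSym.eq_one_or_neg_one Q (by rw [hδuK]; exact huK)
  have hδsq : ((δ : ℤ) : ZMod Q) * ((δ : ℤ) : ZMod Q) = 1 := by
    rcases hδ1 with h | h <;> rw [h] <;> push_cast <;> ring
  set δS : S := φ ((δ : ℤ) : ZMod Q) with hδS_def
  have hδkey : δS * uS ^ (Q / 2) = 1 := by
    rw [hδS_def, huS_def, ← map_pow, ← map_mul, hδK, ← map_one φ]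
    congr 1; rw [← hδK]; exact hδsq
  have hsQ : s ^ Q = φ ((ε : ℤ) : ZMod Q) * s := by
    have h : s ^ Q = (s ^ 2) ^ (Q / 2) * s := by
      rw [← pow_mul, ← pow_succ]; congr 1; omega
    rw [h, hs, ← map_pow, ← hεK]
  have hαu : IsUnit (x + s) := IsUnit.of_mul_eq_one _ hαβ
  have hβu : IsUnit (x - s) := IsUnit.of_mul_eq_one _ (by rw [mul_comm] at hαβ; exact hαβ)
  have hx1Q : (x + 1) ^ Q = x + 1 := by
    have h1 : x + 1 = φ ((a : ZMod Q) + 1) := by rw [map_add, map_one]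
    rw [h1, ← map_pow, ZMod.pow_card]
  obtain ⟨m, hmi, hm1, hA, hB⟩ : ∃ m : ℕ, ((Q : ℤ) - ε) / 2 = (m : ℤ) ∧ 1 ≤ m ∧
      (x + s) ^ m = δS ∧ (x - s) ^ m = δS := by
    rcases hε1 with hε | hε
    · -- ε = 1
      have hεS : φ ((ε : ℤ) : ZMod Q) = 1 := by rw [hε]; push_cast; exact map_one φ
      refine ⟨Q / 2, by rw [hε]; omega, by omega, ?_, ?_⟩
      · have hw2 : (x + 1 + s) ^ 2 = (x + s) * uS := by rw [huS]; linear_combination hs'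
        have hwu : IsUnit (x + 1 + s) := by
          have h := isUnit_of_mul_isUnit_left (x := x + 1 + s) (y := x + 1 + s)
          exact h (by rw [← pow_two, hw2]; exact hαu.mul huSu)
        have hwQ : (x + 1 + s) ^ Q = x + 1 + s := by
          rw [add_pow_char, hx1Q, hsQ, hεS, one_mul]
        have hwp : (x + 1 + s) ^ (Q - 1) = 1 := by
          apply hwu.mul_left_cancel
          rw [mul_one, ← pow_succ']
          rw [show Q - 1 + 1 = Q by omega]
          exact hwQ
        have hkey : (x + s) ^ (Q / 2) * uS ^ (Q / 2) = 1 := by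
          rw [← mul_pow, ← hw2, ← pow_mul, show 2 * (Q / 2) = Q - 1 by omega, hwp]
        exact (huSu.pow (Q / 2)).mul_right_cancel (by rw [hkey, hδkey])
      · have hw2 : (x + 1 - s) ^ 2 = (x - s) * uS := by rw [huS]; linear_combination hs'
        have hwu : IsUnit (x + 1 - s) := by
          have h := isUnit_of_mul_isUnit_left (x := x + 1 - s) (y := x + 1 - s)
          exact h (by rw [← pow_two, hw2]; exact hβu.mul huSu)
        have hwQ : (x + 1 - s) ^ Q = x + 1 - s := by
          rw [sub_pow_char, hx1Q, hsQ, hεS, one_mul]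
        have hwp : (x + 1 - s) ^ (Q - 1) = 1 := by
          apply hwu.mul_left_cancel
          rw [mul_one, ← pow_succ']
          rw [show Q - 1 + 1 = Q by omega]
          exact hwQ
        have hkey : (x - s) ^ (Q / 2) * uS ^ (Q / 2) = 1 := by
          rw [← mul_pow, ← hw2, ← pow_mul, show 2 * (Q / 2) = Q - 1 by omega, hwp]
        exact (huSu.pow (Q / 2)).mul_right_cancel (by rw [hkey, hδkey])
    · -- ε = -1
      have hεS : φ ((ε : ℤ) : ZMod Q) = -1 := by rw [hε]; push_cast; simp
      refine ⟨Q / 2 + 1, by rw [hε]; omega, by omega, ?_, ?_⟩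
      · have hw2 : (x + 1 + s) ^ 2 = (x + s) * uS := by rw [huS]; linear_combination hs'
        have hwQ : (x + 1 + s) ^ Q = x + 1 - s := by
          rw [add_pow_char, hx1Q, hsQ, hεS]; ring
        have hww : (x + 1 - s) * (x + 1 + s) = uS := by rw [huS]; linear_combination -hs'
        have hwp : (x + 1 + s) ^ (Q + 1) = uS := by rw [pow_succ, hwQ, hww]
        have hkey2 : (x + s) ^ (Q / 2 + 1) * uS ^ (Q / 2 + 1) = uS := by
          rw [← mul_pow, ← hw2, ← pow_mul, show 2 * (Q / 2 + 1) = Q + 1 by omega, hwp]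
        have hkey : (x + s) ^ (Q / 2 + 1) * uS ^ (Q / 2) = 1 := by
          apply huSu.mul_right_cancel
          rw [one_mul, mul_assoc, ← pow_succ]
          exact hkey2
        exact (huSu.pow (Q / 2)).mul_right_cancel (by rw [hkey, hδkey])
      · have hw2 : (x + 1 - s) ^ 2 = (x - s) * uS := by rw [huS]; linear_combination hs'
        have hwQ : (x + 1 - s) ^ Q = x + 1 + s := by
          rw [sub_pow_char, hx1Q, hsQ, hεS]; ring
        have hww : (x + 1 + s) * (x + 1 - s) = uS := by rw [huS]; linear_combination -hs'
        have hwp : (x + 1 - s) ^ (Q + 1) = uS := by rw [pow_succ, hwQ, hww]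
        have hkey2 : (x - s) ^ (Q / 2 + 1) * uS ^ (Q / 2 + 1) = uS := by
          rw [← mul_pow, ← hw2, ← pow_mul, show 2 * (Q / 2 + 1) = Q + 1 by omega, hwp]
        have hkey : (x - s) ^ (Q / 2 + 1) * uS ^ (Q / 2) = 1 := by
          apply huSu.mul_right_cancel
          rw [one_mul, mul_assoc, ← pow_succ]
          exact hkey2
        exact (huSu.pow (Q / 2)).mul_right_cancel (by rw [hkey, hδkey])
  -- plumbing back to ℤ
  have hφ2 : φ 2 = (2 : S) := map_ofNat φ 2
  have cast_evalT : ∀ n : ℤ, φ (((T ℤ n).eval a : ℤ) : ZMod Q) = (T S n).eval x := by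
    intro n
    rw [map_intCast]
    have h1 : ((a : ℤ) : S) = x := by rw [hx_def, map_intCast]
    rw [show (((T ℤ n).eval a : ℤ) : S) = (Int.castRingHom S) ((T ℤ n).eval a) from rfl,
      ← eval₂_at_apply, ← eval_map, map_T, show (Int.castRingHom S) a = x from h1]
  have cast_evalU : ∀ n : ℤ, φ (((U ℤ n).eval a : ℤ) : ZMod Q) = (U S n).eval x := by
    intro n
    rw [map_intCast]
    have h1 : ((a : ℤ) : S) = x := by rw [hx_def, map_intCast]
    rw [show (((U ℤ n).eval a : ℤ) : S) = (Int.castRingHom S) ((U ℤ n).eval a) from rfl,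
      ← eval₂_at_apply, ← eval_map, map_U, show (Int.castRingHom S) a = x from h1]
  obtain ⟨hT, hU⟩ := cheb_pow_formula x s hs' m
  constructor
  · rw [hmi, ← ZMod.intCast_eq_intCast_iff]
    have h2 : φ (2 * (((T ℤ (m : ℤ)).eval a : ℤ) : ZMod Q)) = φ (2 * ((δ : ℤ) : ZMod Q)) := by
      rw [map_mul, map_mul, cast_evalT, ← hδS_def, hφ2, hT, hA, hB]; ring
    exact mul_left_cancel₀ h2K (hφinj h2)
  · obtain ⟨k, rfl⟩ : ∃ k, m = k + 1 := ⟨m - 1, by omega⟩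
    have hik : ((Q : ℤ) - ε) / 2 - 1 = (k : ℕ) := by rw [hmi]; push_cast; ring
    rw [hik, ← ZMod.intCast_eq_intCast_iff]
    apply hφinj
    obtain ⟨hTk, hUk⟩ := cheb_pow_formula x s hs' k
    have hU0 : (U S (k : ℤ)).eval x = 0 := by
      have h2su : IsUnit (2 * s : S) := by
        have h2u : IsUnit (2 : S) := by
          rw [← hφ2]; exact (isUnit_iff_ne_zero.mpr h2K).map φ
        have hsu : IsUnit s := by
          have h := isUnit_of_mul_isUnit_left (x := s) (y := s)
          exact h (by rw [← pow_two, hs]; exact (isUnit_iff_ne_zero.mpr hc).map φ)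
        exact h2u.mul hsu
      apply h2su.mul_left_cancel
      rw [mul_zero, hUk, hA, hB]; ring
    rw [cast_evalU, hU0]
    simp
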